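/- Let g : ℂ^N → ℂ be a polynomial function and let ρ, ρ' : [0,ε) → ℂ^N be real analytic paths with ρ(0) = ρ'(0), ρ(s) ≠ ρ'(s) for s ≠ 0, and g(ρ(s)) = g(ρ'(s)) = 0 for all s ∈ [0,ε). Then dg(ρ(s)) applied to the unit secant vector (ρ'(s) − ρ(s))/‖ρ'(s) − ρ(s)‖ tends to 0 as s → 0⁺; equivalently, if o_ℓ denotes the order in s of ℓ(s) := ρ'(s) − ρ(s), then dg(ρ(s))(ℓ(s)/|s|^{o_ℓ}) → 0 as s → 0⁺. -/

import Mathlib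

open MvPolynomial Filter Topology Set

set_option maxHeartbeats 4000000
set_option synthInstance.maxHeartbeats 400000

noncomputable section

namespace NewtonPaper

/-- A point of a finite-dimensional Euclidean space viewed as a plain function. -/
def pt {m : ℕ} (p : EuclideanSpace ℂ (Fin m)) : Fin m → ℂ := p

/-- `d(w;g)`: the minimal value of `∑ i, w i * α i` over the support of `g`. -/
def dmin {n : ℕ} (w : Fin n → ℕ) (g : MvPolynomial (Fin n) ℂ) : ℕ :=
  sInf {m : ℕ | ∃ α ∈ g.support, (∑ i, w i * α i) = m}

/-- The face function `g_w` of `g` with respect to the weight vector `w`. -/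
def facePoly {n : ℕ} (w : Fin n → ℕ) (g : MvPolynomial (Fin n) ℂ) : MvPolynomial (Fin n) ℂ :=
  ∑ α ∈ g.support.filter (fun α => (∑ i, w i * α i) = dmin w g), monomial α (coeff α g)

/-- The Newton polyhedron `Γ₊(g)`. -/
def NewtonPolyhedron {n : ℕ} (g : MvPolynomial (Fin n) ℂ) : Set (Fin n → ℝ) :=
  convexHull ℝ (⋃ α ∈ g.support, {x : Fin n → ℝ | ∀ i, (α i : ℝ) ≤ x i})

/-- The Newton boundary `Γ(g)`: the union of the compact faces of `Γ₊(g)`, i.e. of the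
faces of `Γ₊(g)` supported by strictly positive linear functionals. -/
def NewtonBoundary {n : ℕ} (g : MvPolynomial (Fin n) ℂ) : Set (Fin n → ℝ) :=
  ⋃ w ∈ {w : Fin n → ℝ | ∀ i, 0 < w i},
    {x ∈ NewtonPolyhedron g |
      ∀ y ∈ NewtonPolyhedron g, (∑ i, w i * x i) ≤ ∑ i, w i * y i}

/-- `g` vanishes identically on the coordinate subspace `ℂ^I`. -/
def VanishesOn {n : ℕ} (g : MvPolynomial (Fin n) ℂ) (I : Set (Fin n)) : Prop :=
  ∀ z : Fin n → ℂ, (∀ i, i ∉ I → z i = 0) → eval z g = 0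

/-- `g 0, …, g (p-1)` define a (Newton) non-degenerate complete intersection germ at `0`. -/
def IsNondegCI {n p : ℕ} (g : Fin p → MvPolynomial (Fin n) ℂ) : Prop :=
  ∀ w : Fin n → ℕ, (∀ i, 0 < w i) →
    ∀ z : Fin n → ℂ, (∀ i, z i ≠ 0) → (∀ j, eval z (facePoly w (g j)) = 0) →
      LinearIndependent ℂ fun j => fun i => eval z (pderiv i (facePoly w (g j)))

/-- `R` is a radius of local tameness of the set of functions `{g 0, …, g (p-1)}`. -/
def IsTameRadius {n p : ℕ} (R : ℝ) (g : Fin p → MvPolynomial (Fin n) ℂ) : Prop :=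
  ∀ I : Finset (Fin n), I.Nonempty → (∀ j, VanishesOn (g j) ↑I) →
    ∀ w : Fin n → ℕ, w ≠ 0 → (∀ i, w i = 0 ↔ i ∈ I) →
      ∀ z : Fin n → ℂ, (∀ i, z i ≠ 0) → (∑ i ∈ I, ‖z i‖ ^ 2) < R →
        (∀ j, eval z (facePoly w (g j)) = 0) →
        LinearIndependent ℂ fun j => fun i : {i : Fin n // i ∉ I} =>
          eval z (pderiv i.1 (facePoly w (g j)))

/-- The specialisation `f_t` of a polynomial `P` on `ℂ × ℂⁿ` (variable `0` is `t`). -/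
def specialize {n : ℕ} (t : ℂ) (P : MvPolynomial (Fin (n + 1)) ℂ) : MvPolynomial (Fin n) ℂ :=
  aeval (Fin.cases (C t) fun i => X i) P

/-- The family `{f_t}`, where `f = (F 0) ⋯ (F (k₀-1))`, is Newton-admissible. -/
def NewtonAdmissible {n k₀ : ℕ} (F : Fin k₀ → MvPolynomial (Fin (n + 1)) ℂ) : Prop :=
  ∃ R > (0 : ℝ), ∃ τ > (0 : ℝ), ∀ t : ℂ, ‖t‖ < τ →
    (∀ k, NewtonBoundary (specialize t (F k)) = NewtonBoundary (specialize 0 (F k))) ∧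
    ∀ (p : ℕ) (κ : Fin p → Fin k₀), Function.Injective κ →
      IsNondegCI (fun j => specialize t (F (κ j))) ∧
      ∃ R' > R, IsTameRadius R' fun j => specialize t (F (κ j))

/-- The stratum `S^I(K)` of the canonical toric stratification of `V(f) ⊆ ℂ × ℂⁿ`. -/
def stratum {n k₀ : ℕ} (F : Fin k₀ → MvPolynomial (Fin (n + 1)) ℂ)
    (I : Set (Fin n)) (K : Set (Fin k₀)) : Set (EuclideanSpace ℂ (Fin (n + 1))) :=
  {p | (∀ i : Fin n, pt p i.succ ≠ 0 ↔ i ∈ I) ∧ ∀ k, eval (pt p) (F k) = 0 ↔ k ∈ K}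

/-- The slice `S^I_t(K)` of `S^I(K)`, viewed in `ℂⁿ`. -/
def stratumT {n k₀ : ℕ} (F : Fin k₀ → MvPolynomial (Fin (n + 1)) ℂ) (t : ℂ)
    (I : Set (Fin n)) (K : Set (Fin k₀)) : Set (EuclideanSpace ℂ (Fin n)) :=
  {z | (∀ i : Fin n, pt z i ≠ 0 ↔ i ∈ I) ∧ ∀ k, eval (pt z) (specialize t (F k)) = 0 ↔ k ∈ K}

/-- Orthogonal projection onto a subspace, as an endomorphism. -/
def projOf {m : ℕ} (T : Submodule ℂ (EuclideanSpace ℂ (Fin m))) :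
    EuclideanSpace ℂ (Fin m) →L[ℂ] EuclideanSpace ℂ (Fin m) :=
  T.subtypeL.comp T.orthogonalProjectionOnto

/-- Tangent space of a set at a point (the ℂ-span of the tangent cone; for a
non-singular complex submanifold this is the usual tangent space). -/
def tangentSpaceAt {m : ℕ} (S : Set (EuclideanSpace ℂ (Fin m)))
    (p : EuclideanSpace ℂ (Fin m)) : Submodule ℂ (EuclideanSpace ℂ (Fin m)) :=
  Submodule.span ℂ (tangentConeAt ℂ S p)

/-- Convergence of subspaces in the sense of convergence of orthogonal projections. -/
def TendstoSubspaces {α : Type*} {m : ℕ} (l : Filter α)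
    (T : α → Submodule ℂ (EuclideanSpace ℂ (Fin m)))
    (T' : Submodule ℂ (EuclideanSpace ℂ (Fin m))) : Prop :=
  Tendsto (fun x => projOf (T x)) l (𝓝 (projOf T'))

/-- Whitney's condition (b) for the pair `(S', S)`. -/
def WhitneyB {m : ℕ} (S' S : Set (EuclideanSpace ℂ (Fin m))) : Prop :=
  ∀ q ∈ S' ∩ closure S, ∀ pm qm : ℕ → EuclideanSpace ℂ (Fin m),
    ∀ T : Submodule ℂ (EuclideanSpace ℂ (Fin m)), ∀ u : EuclideanSpace ℂ (Fin m),
      (∀ j, pm j ∈ S) → (∀ j, qm j ∈ S') → (∀ j, pm j ≠ qm j) →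
      Tendsto pm atTop (𝓝 q) → Tendsto qm atTop (𝓝 q) →
      TendstoSubspaces atTop (fun j => tangentSpaceAt S (pm j)) T →
      Tendsto (fun j => (‖pm j - qm j‖ : ℝ)⁻¹ • (pm j - qm j)) atTop (𝓝 u) →
      u ∈ T

/-- `S` is, near `p ∈ S`, a non-singular (complex) locally closed submanifold. -/
def IsNonsingularAt {m : ℕ} (S : Set (EuclideanSpace ℂ (Fin m)))
    (p : EuclideanSpace ℂ (Fin m)) : Prop :=
  ∃ (k : ℕ) (U : Set (EuclideanSpace ℂ (Fin m)))
    (g : EuclideanSpace ℂ (Fin m) → EuclideanSpace ℂ (Fin k)),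
    IsOpen U ∧ p ∈ U ∧ Differentiable ℂ g ∧ S ∩ U = {x ∈ U | g x = 0} ∧
      Function.Surjective (fderiv ℂ g p)

/-- Whitney (b)-regular stratification of `V`. -/
def IsWhitneyStratification {m : ℕ} (V : Set (EuclideanSpace ℂ (Fin m)))
    (𝒮 : Set (Set (EuclideanSpace ℂ (Fin m)))) : Prop :=
  ⋃₀ 𝒮 = V ∧
  (∀ S ∈ 𝒮, ∀ S' ∈ 𝒮, S ≠ S' → Disjoint S S') ∧
  (∀ S ∈ 𝒮, ∀ p ∈ S, IsNonsingularAt S p) ∧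
  (∀ S ∈ 𝒮, ∀ S' ∈ 𝒮, S ≠ S' → WhitneyB S' S)

/-- The coefficient vector of the complex differential of `P` at `p`. -/
def dvec {m : ℕ} (P : MvPolynomial (Fin m) ℂ) (p : EuclideanSpace ℂ (Fin m)) :
    Fin m → ℂ := fun j => eval (pt p) (pderiv j P)

/-- The kernel of the complex differential of `P` at `p`. -/
def dKer {m : ℕ} (P : MvPolynomial (Fin m) ℂ) (p : EuclideanSpace ℂ (Fin m)) :
    Submodule ℂ (EuclideanSpace ℂ (Fin m)) :=
  LinearMap.ker
    ((∑ j, dvec P p j • (EuclideanSpace.proj j : EuclideanSpace ℂ (Fin m) →L[ℂ] ℂ) :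
      EuclideanSpace ℂ (Fin m) →L[ℂ] ℂ) : EuclideanSpace ℂ (Fin m) →ₗ[ℂ] ℂ)

/-- The subspace `ℂ × ℂ^I ⊆ ℂ × ℂⁿ`, where `I = {i | (i : ℕ) < nI}`. -/
def axisCI (n nI : ℕ) : Submodule ℂ (EuclideanSpace ℂ (Fin (n + 1))) :=
  ⨅ i ∈ {i : Fin n | nI ≤ (i : ℕ)},
    LinearMap.ker ((EuclideanSpace.proj i.succ : EuclideanSpace ℂ (Fin (n + 1)) →L[ℂ] ℂ) :
      EuclideanSpace ℂ (Fin (n + 1)) →ₗ[ℂ] ℂ)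

/-- Thom's `a_f` condition for a stratification `𝒮`, with `V(f) = {f = 0}`. -/
def ThomAf {m : ℕ} (P : MvPolynomial (Fin m) ℂ)
    (𝒮 : Set (Set (EuclideanSpace ℂ (Fin m)))) : Prop :=
  ∀ S ∈ 𝒮, ∀ q ∈ S, ∀ pm : ℕ → EuclideanSpace ℂ (Fin m),
    ∀ T : Submodule ℂ (EuclideanSpace ℂ (Fin m)),
      (∀ j, eval (pt (pm j)) P ≠ 0) → (∀ j, dvec P (pm j) ≠ 0) →
      Tendsto pm atTop (𝓝 q) →
      TendstoSubspaces atTop (fun j => dKer P (pm j)) T →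
      tangentSpaceAt S q ≤ T

/-- Inclusion `Fin m → Fin k₀` given `m ≤ k₀`. -/
def castIdx {k₀ m : ℕ} (h : m ≤ k₀) (k : Fin m) : Fin k₀ :=
  ⟨k, lt_of_lt_of_le k.isLt h⟩


/-- The differential of a polynomial as a continuous linear map. -/
def Dop {N : ℕ} (g : MvPolynomial (Fin N) ℂ) (x : EuclideanSpace ℂ (Fin N)) :
    EuclideanSpace ℂ (Fin N) →L[ℂ] ℂ :=
  ∑ j, eval (pt x) (pderiv j g) • (EuclideanSpace.proj j : EuclideanSpace ℂ (Fin N) →L[ℂ] ℂ)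

theorem Dop_apply {N : ℕ} (g : MvPolynomial (Fin N) ℂ) (x v : EuclideanSpace ℂ (Fin N)) :
    Dop g x v = ∑ j, eval (pt x) (pderiv j g) * v j := by
  simp [Dop, ContinuousLinearMap.sum_apply, PiLp.proj_apply, smul_eq_mul]

theorem hasFDerivAt_evalPoly {N : ℕ} (g : MvPolynomial (Fin N) ℂ) (x : EuclideanSpace ℂ (Fin N)) :
    HasFDerivAt (fun y : EuclideanSpace ℂ (Fin N) => eval (pt y) g) (Dop g x) x := by
  classical
  induction g using MvPolynomial.induction_on with
  | C a =>
      have : Dop (C a : MvPolynomial (Fin N) ℂ) x = 0 := by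
        ext v
        simp [Dop, pderiv_C, ContinuousLinearMap.sum_apply]
      rw [this]
      simpa [pt] using hasFDerivAt_const (a : ℂ) x
  | add p q hp hq =>
      have : Dop (p + q) x = Dop p x + Dop q x := by
        ext v
        simp [Dop, ContinuousLinearMap.sum_apply, map_add, add_mul, smul_eq_mul,
          Finset.sum_add_distrib, PiLp.proj_apply]
      rw [this]
      have := hp.add hq
      exact this.congr_of_eventuallyEq (Filter.Eventually.of_forall fun y => by simp [pt])
  | mul_X p i hp =>
      have hproj : HasFDerivAt (fun y : EuclideanSpace ℂ (Fin N) => pt y i)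
          (EuclideanSpace.proj i : EuclideanSpace ℂ (Fin N) →L[ℂ] ℂ) x :=
        (EuclideanSpace.proj i : EuclideanSpace ℂ (Fin N) →L[ℂ] ℂ).hasFDerivAt
      have h := hp.mul hproj
      have heq : Dop (p * X i) x =
          (eval (pt x) p) • (EuclideanSpace.proj i : EuclideanSpace ℂ (Fin N) →L[ℂ] ℂ)
            + (pt x i) • Dop p x := by
        ext v
        simp only [Dop, ContinuousLinearMap.sum_apply, ContinuousLinearMap.smul_apply,
          ContinuousLinearMap.add_apply, PiLp.proj_apply, smul_eq_mul,
          pderiv_mul, pderiv_X, map_add, map_mul, eval_X, Finset.mul_sum,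
          Finset.sum_add_distrib, add_mul, Pi.single_apply]
        rw [add_comm]
        congr 1
        · rw [Finset.sum_eq_single i]
          · simp
          · intro b _ hb; simp [Ne.symm hb]
          · simp
        · exact Finset.sum_congr rfl fun j _ => by ring
      rw [heq]
      have : (fun y : EuclideanSpace ℂ (Fin N) => eval (pt y) (p * X i))
          = fun y => eval (pt y) p * pt y i := by
        funext y; simp [pt]
      rw [this]
      exact h
  
theorem contDiff_evalPoly {N : ℕ} (n : WithTop ℕ∞) (g : MvPolynomial (Fin N) ℂ) :
    ContDiff ℂ n (fun y : EuclideanSpace ℂ (Fin N) => eval (pt y) g) := by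
  induction g using MvPolynomial.induction_on with
  | C a =>
      have : (fun y : EuclideanSpace ℂ (Fin N) => eval (pt y) (C a : MvPolynomial (Fin N) ℂ))
          = fun _ => a := by funext y; simp
      rw [this]; exact contDiff_const
  | add p q hp hq =>
      have : (fun y : EuclideanSpace ℂ (Fin N) => eval (pt y) (p + q))
          = fun y => eval (pt y) p + eval (pt y) q := by funext y; simp
      rw [this]; exact hp.add hq
  | mul_X p i hp =>
      have : ContDiff ℂ n (fun y : EuclideanSpace ℂ (Fin N) => pt y i) :=
        ContinuousLinearMap.contDiff (EuclideanSpace.proj i : EuclideanSpace ℂ (Fin N) →L[ℂ] ℂ)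
      have heq : (fun y : EuclideanSpace ℂ (Fin N) => eval (pt y) (p * X i))
          = fun y => eval (pt y) p * pt y i := by funext y; simp [pt]
      rw [heq]; exact hp.mul this


/-- §7.7 of Eyral–Oka. If `g` vanishes along two real analytic paths
`ρ, ρ'` with the same origin, then `dg(ρ(s))` applied to the unit secant vector
`(ρ'(s) − ρ(s))/‖ρ'(s) − ρ(s)‖` tends to `0` as `s → 0⁺`. -/
theorem differential_kills_unit_secant (N : ℕ) (g : MvPolynomial (Fin N) ℂ)
    (ρ ρ' : ℝ → EuclideanSpace ℂ (Fin N)) (ε : ℝ) (hε : 0 < ε)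
    (hρ : AnalyticAt ℝ ρ 0) (hρ' : AnalyticAt ℝ ρ' 0)
    (h0 : ρ 0 = ρ' 0)
    (hne : ∀ s ∈ Set.Ioo (0 : ℝ) ε, ρ s ≠ ρ' s)
    (hgρ : ∀ s ∈ Set.Ico (0 : ℝ) ε, eval (pt (ρ s)) g = 0)
    (hgρ' : ∀ s ∈ Set.Ico (0 : ℝ) ε, eval (pt (ρ' s)) g = 0) :
    Tendsto (fun s : ℝ =>
        ∑ j, eval (pt (ρ s)) (pderiv j g) *
          pt ((‖ρ' s - ρ s‖ : ℝ)⁻¹ • (ρ' s - ρ s)) j)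
      (𝓝[>] 0) (𝓝 0) := by
  classical
  have hfd : ∀ x : EuclideanSpace ℂ (Fin N),
      fderiv ℂ (fun y : EuclideanSpace ℂ (Fin N) => eval (pt y) g) x = Dop g x :=
    fun x => (hasFDerivAt_evalPoly g x).fderiv
  have hsm : ContDiff ℂ 2 (fun y : EuclideanSpace ℂ (Fin N) => eval (pt y) g) :=
    contDiff_evalPoly 2 g
  have h1 : ContDiffAt ℂ 1
      (fderiv ℂ (fun y : EuclideanSpace ℂ (Fin N) => eval (pt y) g)) (ρ 0) :=
    (hsm.fderiv_right (by norm_num)).contDiffAt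
  obtain ⟨K, t, ht, hlip⟩ := h1.exists_lipschitzOnWith
  obtain ⟨r, hr, hball⟩ := Metric.mem_nhds_iff.1 ht
  have hcρ : ContinuousAt ρ 0 := hρ.continuousAt
  have hcρ' : ContinuousAt ρ' 0 := hρ'.continuousAt
  have ev1 : ∀ᶠ s in 𝓝[>] (0:ℝ), s ∈ Set.Ioo (0:ℝ) ε :=
    Ioo_mem_nhdsGT_of_mem ⟨le_refl 0, hε⟩
  have ev2 : ∀ᶠ s in 𝓝[>] (0:ℝ), ρ s ∈ Metric.ball (ρ 0) r :=
    (hcρ.eventually_mem (Metric.ball_mem_nhds _ hr)).filter_mono nhdsWithin_le_nhds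
  have ev3 : ∀ᶠ s in 𝓝[>] (0:ℝ), ρ' s ∈ Metric.ball (ρ 0) r := by
    have hmem : Metric.ball (ρ 0) r ∈ 𝓝 (ρ' 0) := by
      rw [← h0]; exact Metric.ball_mem_nhds _ hr
    exact (hcρ'.eventually_mem hmem).filter_mono nhdsWithin_le_nhds
  have hbnd : ∀ᶠ s in 𝓝[>] (0:ℝ),
      ‖∑ j, eval (pt (ρ s)) (pderiv j g) *
          pt ((‖ρ' s - ρ s‖ : ℝ)⁻¹ • (ρ' s - ρ s)) j‖ ≤ (K : ℝ) * ‖ρ' s - ρ s‖ := by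
    filter_upwards [ev1, ev2, ev3] with s hs h2 h3
    set x := ρ s with hxdef
    set y := ρ' s with hydef
    have hxy : x ≠ y := hne s hs
    have hℓ : y - x ≠ 0 := sub_ne_zero.mpr (Ne.symm hxy)
    have hn : (0:ℝ) < ‖y - x‖ := norm_pos_iff.mpr hℓ
    have hseg : segment ℝ x y ⊆ Metric.ball (ρ 0) r :=
      (convex_ball _ _).segment_subset h2 h3
    have hDle : ∀ z ∈ segment ℝ x y, ‖Dop g z - Dop g x‖ ≤ (K:ℝ) * ‖y - x‖ := by
      intro z hz
      have hz1 : ‖Dop g z - Dop g x‖ ≤ (K:ℝ) * ‖z - x‖ := by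
        rw [← hfd z, ← hfd x, ← dist_eq_norm, ← dist_eq_norm]
        exact hlip.dist_le_mul z (hball (hseg hz)) x (hball h2)
      refine hz1.trans (mul_le_mul_of_nonneg_left ?_ K.2)
      obtain ⟨a, b, ha, hb, hab, rfl⟩ := hz
      have hz2 : a • x + b • y - x = b • (y - x) := by
        have hab' : a = 1 - b := by linarith
        rw [hab', sub_smul, one_smul, smul_sub]
        abel
      rw [hz2, norm_smul, Real.norm_of_nonneg hb]
      nlinarith [norm_nonneg (y - x)]
    have key : ‖eval (pt y) g - eval (pt x) g - (Dop g x) (y - x)‖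
        ≤ ((K:ℝ) * ‖y - x‖) * ‖y - x‖ :=
      (convex_segment x y).norm_image_sub_le_of_norm_hasFDerivWithin_le'
        (fun z _ => (hasFDerivAt_evalPoly g z).hasFDerivWithinAt)
        hDle (left_mem_segment ℝ x y) (right_mem_segment ℝ x y)
    have hx0 : eval (pt x) g = 0 := hgρ s ⟨le_of_lt hs.1, hs.2⟩
    have hy0 : eval (pt y) g = 0 := hgρ' s ⟨le_of_lt hs.1, hs.2⟩
    rw [hx0, hy0] at key
    simp only [sub_zero, zero_sub, norm_neg] at key
    have hval : (∑ j, eval (pt x) (pderiv j g) * pt ((‖y - x‖ : ℝ)⁻¹ • (y - x)) j)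
        = ((‖y - x‖⁻¹ : ℝ) : ℂ) * (Dop g x) (y - x) := by
      rw [Dop_apply, Finset.mul_sum]
      refine Finset.sum_congr rfl fun j _ => ?_
      have hptj : pt ((‖y - x‖ : ℝ)⁻¹ • (y - x)) j
          = ((‖y - x‖⁻¹ : ℝ) : ℂ) * (y - x) j := by
        simp [pt, PiLp.smul_apply, Complex.real_smul]
      rw [hptj]; ring
    rw [hval, norm_mul]
    have hnr : ‖(((‖y - x‖)⁻¹ : ℝ) : ℂ)‖ = ‖y - x‖⁻¹ := by
      rw [Complex.norm_real, Real.norm_eq_abs, abs_of_nonneg (inv_nonneg.mpr (norm_nonneg _))]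
    rw [hnr]
    calc ‖y - x‖⁻¹ * ‖(Dop g x) (y - x)‖
        ≤ ‖y - x‖⁻¹ * (((K:ℝ) * ‖y - x‖) * ‖y - x‖) :=
          mul_le_mul_of_nonneg_left key (inv_nonneg.mpr (norm_nonneg _))
      _ = (K:ℝ) * ‖y - x‖ := by field_simp
  have hlim : Tendsto (fun s => (K:ℝ) * ‖ρ' s - ρ s‖) (𝓝[>] (0:ℝ)) (𝓝 0) := by
    have h1' : Tendsto (fun s => ρ' s - ρ s) (𝓝 (0:ℝ)) (𝓝 (ρ' 0 - ρ 0)) := hcρ'.sub hcρ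
    have h2' : ρ' 0 - ρ 0 = 0 := by rw [← h0]; simp
    rw [h2'] at h1'
    have h3' := (h1'.norm.const_mul (K:ℝ)).mono_left (nhdsWithin_le_nhds (s := Set.Ioi (0:ℝ)))
    simpa using h3'
  exact squeeze_zero_norm' hbnd hlim


end NewtonPaper
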